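/- If {I_1, I_2} ⊆ binom([n],k) is not weakly separated, witnessed by g_1, g_2 ∈ I_1∖I_2 and h_1, h_2 ∈ I_2∖I_1 in cyclic order g_1 < h_1 < g_2 < h_2, then there exists j ∈ {1,...,n} such that the derived pair {I_1', I_2'} ⊆ binom([n]∖{j}, k-1) is also not weakly separated, where I_p' is obtained from I_p by deleting j if j ∈ I_p and otherwise deleting the cyclically next element of I_p after j, provided k ≥ 3. -/

import Mathlib

/-- Weak separation with respect to the standard cyclic order. -/
def WeaklySeparated (n : ℕ) (I J : Finset (Fin n)) : Prop :=
  ¬ ∃ a b c d : Fin n, a < b ∧ b < c ∧ c < d ∧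
    ((a ∈ I ∧ a ∉ J ∧ c ∈ I ∧ c ∉ J ∧ b ∈ J ∧ b ∉ I ∧ d ∈ J ∧ d ∉ I) ∨
     (a ∈ J ∧ a ∉ I ∧ c ∈ J ∧ c ∉ I ∧ b ∈ I ∧ b ∉ J ∧ d ∈ I ∧ d ∉ J))

/-- The cyclically next element of `I` after `j`. -/
def nextOf (n : ℕ) [NeZero n] (I : Finset (Fin n)) (j : Fin n) : Fin n :=
  if h : (I.image (fun q => q - j)).Nonempty then (I.image (fun q => q - j)).min' h + j
  else j

/-- The derived subset: delete `j` from `I` if `j ∈ I`, otherwise delete the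
cyclically next element of `I` after `j`. -/
def derived (n : ℕ) [NeZero n] (I : Finset (Fin n)) (j : Fin n) : Finset (Fin n) :=
  if j ∈ I then I.erase j else I.erase (nextOf n I j)

lemma fin_sub_val (n : ℕ) [NeZero n] (x y : Fin n) :
    (x - y).val = if y.val ≤ x.val then x.val - y.val else x.val + n - y.val := by
  have h : (x - y).val = (n - y.val + x.val) % n := by rw [Fin.sub_def]
  have hx := x.isLt; have hy := y.isLt
  split_ifs with hle
  · have h2 : n - y.val + x.val = (x.val - y.val) + n := by omega
    rw [h, h2, Nat.add_mod_right, Nat.mod_eq_of_lt (by omega)]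
  · rw [h, Nat.mod_eq_of_lt (by omega)]; omega

lemma fin_add_val (n : ℕ) [NeZero n] (x y : Fin n) :
    (x + y).val = if x.val + y.val < n then x.val + y.val else x.val + y.val - n := by
  have h : (x + y).val = (x.val + y.val) % n := by rw [Fin.add_def]
  have hx := x.isLt; have hy := y.isLt
  split_ifs with hlt
  · rw [h, Nat.mod_eq_of_lt hlt]
  · have h2 : x.val + y.val = (x.val + y.val - n) + n := by omega
    rw [h, h2, Nat.add_mod_right, Nat.mod_eq_of_lt (by omega)]; omega

lemma sub_val_cases (n : ℕ) [NeZero n] (base x y : Fin n) :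
    ((y - base).val ≤ (x - base).val ∧ (x - y).val = (x - base).val - (y - base).val) ∨
    ((x - base).val < (y - base).val ∧ (x - y).val = (x - base).val + n - (y - base).val) := by
  have hxy : x - y = (x - base) - (y - base) := (sub_sub_sub_cancel_right x y base).symm
  have hv := fin_sub_val n (x - base) (y - base)
  rcases le_or_gt (y - base).val (x - base).val with h | h
  · left; refine ⟨h, ?_⟩; rw [hxy, hv, if_pos h]
  · right; refine ⟨h, ?_⟩; rw [hxy, hv, if_neg (by omega)]

lemma nextOf_mem (n : ℕ) [NeZero n] (I : Finset (Fin n)) (j : Fin n) (hI : I.Nonempty) :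
    nextOf n I j ∈ I := by
  have himg : (I.image (fun q => q - j)).Nonempty := hI.image _
  have h1 : nextOf n I j = (I.image (fun q => q - j)).min' himg + j := dif_pos himg
  rw [h1]
  have := Finset.min'_mem _ himg
  rw [Finset.mem_image] at this
  obtain ⟨q, hq, hq2⟩ := this
  rw [← hq2, sub_add_cancel]; exact hq

lemma nextOf_min (n : ℕ) [NeZero n] (I : Finset (Fin n)) (j x : Fin n) (hx : x ∈ I) :
    (nextOf n I j - j).val ≤ (x - j).val := by
  have himg : (I.image (fun q => q - j)).Nonempty := ⟨x - j, Finset.mem_image_of_mem _ hx⟩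
  have h1 : nextOf n I j = (I.image (fun q => q - j)).min' himg + j := dif_pos himg
  rw [h1, add_sub_cancel_right]
  exact Fin.le_def.mp (Finset.min'_le _ _ (Finset.mem_image_of_mem _ hx))

lemma nextOf_self (n : ℕ) [NeZero n] (I : Finset (Fin n)) (j : Fin n) (hj : j ∈ I) :
    nextOf n I j = j := by
  have h := nextOf_min n I j j hj
  simp only [sub_self, Fin.val_zero, Nat.le_zero] at h
  have h2 : nextOf n I j - j = 0 := Fin.val_injective h
  exact sub_eq_zero.mp h2

lemma derived_eq (n : ℕ) [NeZero n] (I : Finset (Fin n)) (j : Fin n) :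
    derived n I j = I.erase (nextOf n I j) := by
  rw [derived]
  split_ifs with hj
  · rw [nextOf_self n I j hj]
  · rfl

lemma derived_card (n : ℕ) [NeZero n] (I : Finset (Fin n)) (j : Fin n) (hI : I.Nonempty) :
    (derived n I j).card = I.card - 1 := by
  rw [derived_eq, Finset.card_erase_of_mem (nextOf_mem n I j hI)]

lemma not_mem_derived (n : ℕ) [NeZero n] (I : Finset (Fin n)) (j : Fin n) :
    j ∉ derived n I j := by
  rw [derived_eq]
  intro h
  rw [Finset.mem_erase] at h
  by_cases hj : j ∈ I
  · exact h.1 (nextOf_self n I j hj).symm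
  · exact hj h.2

lemma derived_subset (n : ℕ) [NeZero n] (I : Finset (Fin n)) (j x : Fin n)
    (hx : x ∈ derived n I j) : x ∈ I := by
  rw [derived_eq] at hx
  exact Finset.mem_of_mem_erase hx

/-- A cyclically alternating quadruple (relative to any base point) witnesses
non-weak-separation. -/
lemma cyc4 (n : ℕ) [NeZero n] (P Q : Finset (Fin n)) (b x1 x2 x3 x4 : Fin n)
    (h12 : (x1 - b).val < (x2 - b).val) (h23 : (x2 - b).val < (x3 - b).val)
    (h34 : (x3 - b).val < (x4 - b).val)
    (m1 : x1 ∈ P) (m1' : x1 ∉ Q) (m2 : x2 ∈ Q) (m2' : x2 ∉ P)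
    (m3 : x3 ∈ P) (m3' : x3 ∉ Q) (m4 : x4 ∈ Q) (m4' : x4 ∉ P) :
    ¬ WeaklySeparated n P Q := by
  intro hws
  unfold WeaklySeparated at hws
  apply hws
  have key : ∀ x : Fin n,
      ((x - b).val + b.val < n ∧ x.val = (x - b).val + b.val) ∨
      (n ≤ (x - b).val + b.val ∧ x.val = (x - b).val + b.val - n) := by
    intro x
    have h := fin_add_val n (x - b) b
    rw [sub_add_cancel] at h
    rcases lt_or_ge ((x - b).val + b.val) n with hc | hc
    · left; exact ⟨hc, by rw [h, if_pos hc]⟩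
    · right; exact ⟨hc, by rw [h, if_neg (by omega)]⟩
  have hlt1 := (x1 - b).isLt
  have hlt2 := (x2 - b).isLt
  have hlt3 := (x3 - b).isLt
  have hlt4 := (x4 - b).isLt
  rcases key x1 with ⟨c1, e1⟩ | ⟨c1, e1⟩ <;>
  rcases key x2 with ⟨c2, e2⟩ | ⟨c2, e2⟩ <;>
  rcases key x3 with ⟨c3, e3⟩ | ⟨c3, e3⟩ <;>
  rcases key x4 with ⟨c4, e4⟩ | ⟨c4, e4⟩ <;>
  first
  | exact ⟨x1, x2, x3, x4, Fin.lt_def.mpr (by omega), Fin.lt_def.mpr (by omega),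
      Fin.lt_def.mpr (by omega), Or.inl ⟨m1, m1', m3, m3', m2, m2', m4, m4'⟩⟩
  | exact ⟨x4, x1, x2, x3, Fin.lt_def.mpr (by omega), Fin.lt_def.mpr (by omega),
      Fin.lt_def.mpr (by omega), Or.inr ⟨m4, m4', m2, m2', m1, m1', m3, m3'⟩⟩
  | exact ⟨x3, x4, x1, x2, Fin.lt_def.mpr (by omega), Fin.lt_def.mpr (by omega),
      Fin.lt_def.mpr (by omega), Or.inl ⟨m3, m3', m1, m1', m4, m4', m2, m2'⟩⟩
  | exact ⟨x2, x3, x4, x1, Fin.lt_def.mpr (by omega), Fin.lt_def.mpr (by omega),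
      Fin.lt_def.mpr (by omega), Or.inr ⟨m2, m2', m4, m4', m3, m3', m1, m1'⟩⟩
  | omega

set_option maxHeartbeats 1000000 in
theorem stmt18 (n k : ℕ) [NeZero n] (hk : 3 ≤ k)
    (I1 I2 : Finset (Fin n)) (hc1 : I1.card = k) (hc2 : I2.card = k)
    (g1 g2 h1 h2 : Fin n)
    (hg1 : g1 ∈ I1 \ I2) (hg2 : g2 ∈ I1 \ I2)
    (hh1 : h1 ∈ I2 \ I1) (hh2 : h2 ∈ I2 \ I1)
    -- cyclic order g1 < h1 < g2 < h2
    (hcyc : (h1 - g1).val < (g2 - g1).val ∧ (g2 - g1).val < (h2 - g1).val) :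
    ∃ j : Fin n,
      (derived n I1 j).card = k - 1 ∧ (derived n I2 j).card = k - 1 ∧
      j ∉ derived n I1 j ∧ j ∉ derived n I2 j ∧
      ¬ WeaklySeparated n (derived n I1 j) (derived n I2 j) := by
  rw [Finset.mem_sdiff] at hg1 hg2 hh1 hh2
  obtain ⟨hg1I1, hg1I2⟩ := hg1
  obtain ⟨hg2I1, hg2I2⟩ := hg2
  obtain ⟨hh1I2, hh1I1⟩ := hh1
  obtain ⟨hh2I2, hh2I1⟩ := hh2
  have hne1 : I1.Nonempty := by rw [← Finset.card_pos, hc1]; omega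
  have hne2 : I2.Nonempty := by rw [← Finset.card_pos, hc2]; omega
  have main : ∀ j : Fin n,
      ¬ WeaklySeparated n (derived n I1 j) (derived n I2 j) →
      (derived n I1 j).card = k - 1 ∧ (derived n I2 j).card = k - 1 ∧
      j ∉ derived n I1 j ∧ j ∉ derived n I2 j ∧
      ¬ WeaklySeparated n (derived n I1 j) (derived n I2 j) := by
    intro j h
    exact ⟨by rw [derived_card n I1 j hne1, hc1], by rw [derived_card n I2 j hne2, hc2],
      not_mem_derived n I1 j, not_mem_derived n I2 j, h⟩
  have hz : (g1 - g1).val = 0 := by simp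
  have vne : ∀ x y : Fin n, x ≠ y → (x - g1).val ≠ (y - g1).val := by
    intro x y hxy e
    exact hxy (sub_left_inj.mp (Fin.val_injective e))
  have hh1g1 : h1 ≠ g1 := fun e => hh1I1 (e ▸ hg1I1)
  have F0 : 0 < (h1 - g1).val := by
    have := vne h1 g1 hh1g1
    omega
  have F1 := hcyc.1
  have F2 := hcyc.2
  have F3 := (h2 - g1).isLt
  -- Case 0 : the sets intersect
  by_cases hint : (I1 ∩ I2).Nonempty
  · obtain ⟨t, ht⟩ := hint
    rw [Finset.mem_inter] at ht
    refine ⟨t, main t ?_⟩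
    have hD1 : derived n I1 t = I1.erase t := by rw [derived_eq, nextOf_self n I1 t ht.1]
    have hD2 : derived n I2 t = I2.erase t := by rw [derived_eq, nextOf_self n I2 t ht.2]
    apply cyc4 n _ _ g1 g1 h1 g2 h2 (by omega) (by omega) (by omega)
    · rw [hD1, Finset.mem_erase]; exact ⟨fun e => hg1I2 (e ▸ ht.2), hg1I1⟩
    · rw [hD2]; exact fun h => hg1I2 (Finset.mem_of_mem_erase h)
    · rw [hD2, Finset.mem_erase]; exact ⟨fun e => hh1I1 (e ▸ ht.1), hh1I2⟩
    · rw [hD1]; exact fun h => hh1I1 (Finset.mem_of_mem_erase h)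
    · rw [hD1, Finset.mem_erase]; exact ⟨fun e => hg2I2 (e ▸ ht.2), hg2I1⟩
    · rw [hD2]; exact fun h => hg2I2 (Finset.mem_of_mem_erase h)
    · rw [hD2, Finset.mem_erase]; exact ⟨fun e => hh2I1 (e ▸ ht.1), hh2I2⟩
    · rw [hD1]; exact fun h => hh2I1 (Finset.mem_of_mem_erase h)
  -- Disjoint case
  · have hdisj : ∀ x : Fin n, x ∈ I1 → x ∈ I2 → False := fun x hx1 hx2 =>
      hint ⟨x, Finset.mem_inter.mpr ⟨hx1, hx2⟩⟩
    -- extra elements g3 and h3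
    have hg1g2 : g1 ≠ g2 := by
      intro e
      rw [← e] at F1
      omega
    have hh1h2 : h1 ≠ h2 := by
      intro e
      rw [← e] at F2
      omega
    -- extract g3
    have hcard3 : ((I1.erase g1).erase g2).Nonempty := by
      rw [← Finset.card_pos, Finset.card_erase_of_mem
        (Finset.mem_erase.mpr ⟨fun e => hg1g2 e.symm, hg2I1⟩),
        Finset.card_erase_of_mem hg1I1, hc1]
      omega
    obtain ⟨g3, hg3⟩ := hcard3
    rw [Finset.mem_erase, Finset.mem_erase] at hg3
    obtain ⟨hg3g2, hg3g1, hg3I1⟩ := hg3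
    have hcard4 : ((I2.erase h1).erase h2).Nonempty := by
      rw [← Finset.card_pos, Finset.card_erase_of_mem
        (Finset.mem_erase.mpr ⟨fun e => hh1h2 e.symm, hh2I2⟩),
        Finset.card_erase_of_mem hh1I2, hc2]
      omega
    obtain ⟨h3, hh3⟩ := hcard4
    rw [Finset.mem_erase, Finset.mem_erase] at hh3
    obtain ⟨hh3h2, hh3h1, hh3I2⟩ := hh3
    have hg3I2 : g3 ∉ I2 := fun h => hdisj g3 hg3I1 h
    have hh3I1 : h3 ∉ I1 := fun h => hdisj h3 h hh3I2
    have hg3h3 : g3 ≠ h3 := fun e => hg3I2 (e ▸ hh3I2)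
    have hg3h1 : g3 ≠ h1 := fun e => hh1I1 (e ▸ hg3I1)
    have hg3h2 : g3 ≠ h2 := fun e => hh2I1 (e ▸ hg3I1)
    have hh3g1 : h3 ≠ g1 := fun e => hg1I2 (e ▸ hh3I2)
    have hh3g2 : h3 ≠ g2 := fun e => hg2I2 (e ▸ hh3I2)
    have Vp0 := vne g3 g1 hg3g1
    have Vpa := vne g3 h1 hg3h1
    have Vpb := vne g3 g2 hg3g2
    have Vpc := vne g3 h2 hg3h2
    have Vq0 := vne h3 g1 hh3g1
    have Vqa := vne h3 h1 hh3h1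
    have Vqb := vne h3 g2 hh3g2
    have Vqc := vne h3 h2 hh3h2
    have Vpq := vne g3 h3 hg3h3
    have hplt := (g3 - g1).isLt
    have hqlt := (h3 - g1).isLt
    have k1 := sub_val_cases n g1 h1 g3
    have k2 := sub_val_cases n g1 h2 g3
    have k3 := sub_val_cases n g1 h3 g3
    have k4 := sub_val_cases n g1 g1 h3
    have k5 := sub_val_cases n g1 g2 h3
    have k6 := sub_val_cases n g1 g3 h3
    obtain ⟨E2, hE2def⟩ : ∃ E2, E2 = nextOf n I2 g3 := ⟨_, rfl⟩
    obtain ⟨E1, hE1def⟩ : ∃ E1, E1 = nextOf n I1 h3 := ⟨_, rfl⟩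
    have minE2h1 := nextOf_min n I2 g3 h1 hh1I2
    have minE2h2 := nextOf_min n I2 g3 h2 hh2I2
    have minE2h3 := nextOf_min n I2 g3 h3 hh3I2
    have minE1g1 := nextOf_min n I1 h3 g1 hg1I1
    have minE1g2 := nextOf_min n I1 h3 g2 hg2I1
    have minE1g3 := nextOf_min n I1 h3 g3 hg3I1
    rw [← hE2def] at minE2h1 minE2h2 minE2h3
    rw [← hE1def] at minE1g1 minE1g2 minE1g3
    have hD1g3 : derived n I1 g3 = I1.erase g3 := by
      rw [derived_eq, nextOf_self n I1 g3 hg3I1]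
    have hD2g3 : derived n I2 g3 = I2.erase E2 := by rw [derived_eq, ← hE2def]
    have hD2h3 : derived n I2 h3 = I2.erase h3 := by
      rw [derived_eq, nextOf_self n I2 h3 hh3I2]
    have hD1h3 : derived n I1 h3 = I1.erase E1 := by rw [derived_eq, ← hE1def]
    have buildG3 : ∀ y2 y4 : Fin n, y2 ∈ I2 → y4 ∈ I2 → y2 ≠ E2 → y4 ≠ E2 →
        0 < (y2 - g1).val → (y2 - g1).val < (g2 - g1).val → (g2 - g1).val < (y4 - g1).val →
        ¬ WeaklySeparated n (derived n I1 g3) (derived n I2 g3) := by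
      intro y2 y4 hy2 hy4 hy2E hy4E l1 l2 l3
      apply cyc4 n _ _ g1 g1 y2 g2 y4 (by omega) l2 l3
      · rw [hD1g3, Finset.mem_erase]; exact ⟨Ne.symm hg3g1, hg1I1⟩
      · exact fun h => hg1I2 (derived_subset n I2 g3 g1 h)
      · rw [hD2g3, Finset.mem_erase]; exact ⟨hy2E, hy2⟩
      · exact fun h => hdisj y2 (derived_subset n I1 g3 y2 h) hy2
      · rw [hD1g3, Finset.mem_erase]; exact ⟨Ne.symm hg3g2, hg2I1⟩
      · exact fun h => hg2I2 (derived_subset n I2 g3 g2 h)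
      · rw [hD2g3, Finset.mem_erase]; exact ⟨hy4E, hy4⟩
      · exact fun h => hdisj y4 (derived_subset n I1 g3 y4 h) hy4
    have buildH3 : ∀ y1 y3 : Fin n, y1 ∈ I1 → y3 ∈ I1 → y1 ≠ E1 → y3 ≠ E1 →
        (y1 - g1).val < (h1 - g1).val → (h1 - g1).val < (y3 - g1).val →
        (y3 - g1).val < (h2 - g1).val →
        ¬ WeaklySeparated n (derived n I1 h3) (derived n I2 h3) := by
      intro y1 y3 hy1 hy3 hy1E hy3E l1 l2 l3
      apply cyc4 n _ _ g1 y1 h1 y3 h2 l1 l2 l3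
      · rw [hD1h3, Finset.mem_erase]; exact ⟨hy1E, hy1⟩
      · exact fun h => hdisj y1 hy1 (derived_subset n I2 h3 y1 h)
      · rw [hD2h3, Finset.mem_erase]; exact ⟨Ne.symm hh3h1, hh1I2⟩
      · exact fun h => hh1I1 (derived_subset n I1 h3 h1 h)
      · rw [hD1h3, Finset.mem_erase]; exact ⟨hy3E, hy3⟩
      · exact fun h => hdisj y3 hy3 (derived_subset n I2 h3 y3 h)
      · rw [hD2h3, Finset.mem_erase]; exact ⟨Ne.symm hh3h2, hh2I2⟩
      · exact fun h => hh2I1 (derived_subset n I1 h3 h2 h)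
    by_cases hB1 : E2 = h1 ∨ E2 = h2
    · by_cases hB2 : E1 = g1 ∨ E1 = g2
      · -- both simple deletions are bad; use rescue witnesses
        have HB1 : (h1 - g3).val ≤ (h3 - g3).val ∨ (h2 - g3).val ≤ (h3 - g3).val := by
          rcases hB1 with e | e
          · left; rw [← e]; exact minE2h3
          · right; rw [← e]; exact minE2h3
        have HB2 : (g1 - h3).val ≤ (g3 - h3).val ∨ (g2 - h3).val ≤ (g3 - h3).val := by
          rcases hB2 with e | e
          · left; rw [← e]; exact minE1g3
          · right; rw [← e]; exact minE1g3
        clear hint hdisj hne1 hne2 hcyc vne hD1g3 hD2g3 hD2h3 hD1h3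
        clear hg1I2 hg2I2 hh1I1 hh2I1 hg3I2 hh3I1 hg3h3 hg3h1 hg3h2 hh3g1 hh3g2 hh1g1
        clear hE2def hE1def hc1 hc2 hk
        have K36 : ((g3 - g1).val < (h3 - g1).val ∧
            (h3 - g3).val = (h3 - g1).val - (g3 - g1).val ∧
            (g3 - h3).val = (g3 - g1).val + n - (h3 - g1).val) ∨
            ((h3 - g1).val < (g3 - g1).val ∧
            (h3 - g3).val = (h3 - g1).val + n - (g3 - g1).val ∧
            (g3 - h3).val = (g3 - g1).val - (h3 - g1).val) := by
          clear HB1 HB2 k1 k2 k4 k5; omega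
        clear k3 k6
        have K4 : (g1 - h3).val = n - (h3 - g1).val := by
          clear HB1 HB2 K36 k1 k2 k5; omega
        clear k4
        by_cases hp1 : (g3 - g1).val < (h1 - g1).val
        · -- g3 in arc (g1, h1)
          have K1 : (h1 - g3).val = (h1 - g1).val - (g3 - g1).val := by
            clear HB1 HB2 K36 K4 k2 k5; omega
          have K2 : (h2 - g3).val = (h2 - g1).val - (g3 - g1).val := by
            clear HB1 HB2 K36 K4 k1 k5; omega
          clear k1 k2
          by_cases hq1 : (h3 - g1).val < (h1 - g1).val
          · exfalso
            have K5 : (g2 - h3).val = (g2 - g1).val - (h3 - g1).val := by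
              clear HB1 HB2 K36 K4 K1 K2; omega
            clear k5; omega
          · by_cases hq2 : (h3 - g1).val < (g2 - g1).val
            · -- h3 in arc (h1, g2): j := g3, quad (g1, h3, g2, h2)
              clear k5
              have hE2 : E2 = h1 := by
                rcases hB1 with e | e
                · exact e
                · exfalso; rw [e] at minE2h1; omega
              exact ⟨g3, main g3 (buildG3 h3 h2 hh3I2 hh2I2 (by rw [hE2]; exact hh3h1)
                (by rw [hE2]; exact fun e => hh1h2 e.symm) (by omega) (by omega) (by omega))⟩
            · -- h3 beyond g2: j := h3, quad (g3, h1, g2, h2)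
              have K5 : (g2 - h3).val = (g2 - g1).val + n - (h3 - g1).val := by
                clear HB1 HB2 K36 K4 K1 K2; omega
              clear k5
              have hE1 : E1 = g1 := by
                rcases hB2 with e | e
                · exact e
                · exfalso; rw [e] at minE1g3; omega
              exact ⟨h3, main h3 (buildH3 g3 g2 hg3I1 hg2I1 (by rw [hE1]; exact hg3g1)
                (by rw [hE1]; exact fun e => hg1g2 e.symm) (by omega) (by omega) (by omega))⟩
        · by_cases hp2 : (g3 - g1).val < (g2 - g1).val
          · -- g3 in arc (h1, g2)
            have K1 : (h1 - g3).val = (h1 - g1).val + n - (g3 - g1).val := by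
              clear HB1 HB2 K36 K4 k2 k5; omega
            have K2 : (h2 - g3).val = (h2 - g1).val - (g3 - g1).val := by
              clear HB1 HB2 K36 K4 k1 k5; omega
            clear k1 k2
            by_cases hq1 : (h3 - g1).val < (h1 - g1).val
            · -- j := h3, quad (g1, h1, g3, h2)
              have K5 : (g2 - h3).val = (g2 - g1).val - (h3 - g1).val := by
                clear HB1 HB2 K36 K4 K1 K2; omega
              clear k5
              have hE1 : E1 = g2 := by
                rcases hB2 with e | e
                · exfalso; rw [e] at minE1g3; omega
                · exact e
              exact ⟨h3, main h3 (buildH3 g1 g3 hg1I1 hg3I1 (by rw [hE1]; exact hg1g2)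
                (by rw [hE1]; exact hg3g2) (by omega) (by omega) (by omega))⟩
            · by_cases hq3 : (h3 - g1).val < (h2 - g1).val
              · exfalso
                have K5 : ((h3 - g1).val ≤ (g2 - g1).val ∧
                    (g2 - h3).val = (g2 - g1).val - (h3 - g1).val) ∨
                    ((g2 - g1).val < (h3 - g1).val ∧
                    (g2 - h3).val = (g2 - g1).val + n - (h3 - g1).val) := k5
                clear k5; omega
              · -- h3 in arc (h2, g1): j := g3, quad (g1, h1, g2, h3)
                clear k5
                have hE2 : E2 = h2 := by
                  rcases hB1 with e | e
                  · exfalso; rw [e] at minE2h3; omega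
                  · exact e
                exact ⟨g3, main g3 (buildG3 h1 h3 hh1I2 hh3I2 (by rw [hE2]; exact hh1h2)
                  (by rw [hE2]; exact hh3h2) (by omega) (by omega) (by omega))⟩
          · by_cases hp3 : (g3 - g1).val < (h2 - g1).val
            · -- g3 in arc (g2, h2)
              have K1 : (h1 - g3).val = (h1 - g1).val + n - (g3 - g1).val := by
                clear HB1 HB2 K36 K4 k2 k5; omega
              have K2 : (h2 - g3).val = (h2 - g1).val - (g3 - g1).val := by
                clear HB1 HB2 K36 K4 k1 k5; omega
              clear k1 k2
              by_cases hq2 : (h3 - g1).val < (g2 - g1).val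
              · -- j := h3, quad (g1, h1, g3, h2)
                have K5 : (g2 - h3).val = (g2 - g1).val - (h3 - g1).val := by
                  clear HB1 HB2 K36 K4 K1 K2; omega
                clear k5
                have hE1 : E1 = g2 := by
                  rcases hB2 with e | e
                  · exfalso; rw [e] at minE1g3; omega
                  · exact e
                exact ⟨h3, main h3 (buildH3 g1 g3 hg1I1 hg3I1 (by rw [hE1]; exact hg1g2)
                  (by rw [hE1]; exact hg3g2) (by omega) (by omega) (by omega))⟩
              · by_cases hq3 : (h3 - g1).val < (h2 - g1).val
                · exfalso
                  have K5 : (g2 - h3).val = (g2 - g1).val + n - (h3 - g1).val := by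
                    clear HB1 HB2 K36 K4 K1 K2; omega
                  clear k5; omega
                · -- j := g3, quad (g1, h1, g2, h3)
                  clear k5
                  have hE2 : E2 = h2 := by
                    rcases hB1 with e | e
                    · exfalso; rw [e] at minE2h3; omega
                    · exact e
                  exact ⟨g3, main g3 (buildG3 h1 h3 hh1I2 hh3I2 (by rw [hE2]; exact hh1h2)
                    (by rw [hE2]; exact hh3h2) (by omega) (by omega) (by omega))⟩
            · -- g3 in arc (h2, g1)
              have K1 : (h1 - g3).val = (h1 - g1).val + n - (g3 - g1).val := by
                clear HB1 HB2 K36 K4 k2 k5; omega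
              have K2 : (h2 - g3).val = (h2 - g1).val + n - (g3 - g1).val := by
                clear HB1 HB2 K36 K4 k1 k5; omega
              clear k1 k2
              by_cases hq1 : (h3 - g1).val < (h1 - g1).val
              · exfalso
                have K5 : (g2 - h3).val = (g2 - g1).val - (h3 - g1).val := by
                  clear HB1 HB2 K36 K4 K1 K2; omega
                clear k5; omega
              · by_cases hq2 : (h3 - g1).val < (g2 - g1).val
                · -- j := g3, quad (g1, h3, g2, h2)
                  clear k5
                  have hE2 : E2 = h1 := by
                    rcases hB1 with e | e
                    · exact e
                    · exfalso; rw [e] at minE2h1; omega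
                  exact ⟨g3, main g3 (buildG3 h3 h2 hh3I2 hh2I2 (by rw [hE2]; exact hh3h1)
                    (by rw [hE2]; exact fun e => hh1h2 e.symm) (by omega) (by omega) (by omega))⟩
                · exfalso
                  have K5 : (g2 - h3).val = (g2 - g1).val + n - (h3 - g1).val := by
                    clear HB1 HB2 K36 K4 K1 K2; omega
                  clear k5; omega
      · -- deleting via h3 is safe
        push_neg at hB2
        exact ⟨h3, main h3 (buildH3 g1 g2 hg1I1 hg2I1 (Ne.symm hB2.1) (Ne.symm hB2.2)
          (by omega) F1 F2)⟩
    · -- deleting via g3 is safe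
      push_neg at hB1
      exact ⟨g3, main g3 (buildG3 h1 h2 hh1I2 hh2I2 (Ne.symm hB1.1) (Ne.symm hB1.2)
        F0 F1 F2)⟩
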